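/- arXiv:0810.2127 — 3 statements merged into one kernel-verified Lean document; each statement's English description precedes it below -/
import Mathlib

section
/- Multivariate Exponential Formula: Let K be a field of characteristic 0 and f : ℕⁿ \ {0} → K. Define g : ℕⁿ → K by g(0,…,0) = 1 and, for disjoint finite sets V_1,…,V_n not all empty, g(|V_1|,…,|V_n|) = ∑_{π ∈ Π(V_1 ∪ ⋯ ∪ V_n)} ∏_{i=1}^{ℓ(π)} f(|π_i ∩ V_1|,…,|π_i ∩ V_n|), where the sum is over all set partitions π of the union with blocks π_1,…,π_{ℓ(π)}. Then in K[[X_1,…,X_n]], log(∑_{ℓ∈ℕⁿ} g(ℓ) X^ℓ/ℓ!) = ∑_{0≠ℓ∈ℕⁿ} f(ℓ) X^ℓ/ℓ!. -/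
open Finset

/-- The multivariate EGF `E_h(X) = ∑_{ℓ∈ℕⁿ} h(ℓ) X^ℓ/ℓ!` of `h : ℕⁿ → K`. -/
noncomputable def mvEGF {n : ℕ} (K : Type*) [Field K] (h : (Fin n → ℕ) → K) :
    MvPowerSeries (Fin n) K :=
  fun m : Fin n →₀ ℕ => h m / ∏ i, ((m i).factorial : K)

/-- The multivariate EGF of `f` restricted to `ℕⁿ \ {0}` (the `ℓ = 0` term is dropped). -/
noncomputable def mvEGF₀ {n : ℕ} (K : Type*) [Field K] (f : (Fin n → ℕ) → K) :
    MvPowerSeries (Fin n) K :=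
  fun m : Fin n →₀ ℕ => if (m : Fin n → ℕ) = 0 then 0 else f m / ∏ i, ((m i).factorial : K)


lemma restrict_filter_card {α : Type*} [Fintype α] [DecidableEq α] (a₀ : α) (p : α → Prop) [DecidablePred p] :
    (univ.filter (fun a' : {a : α // a ≠ a₀} => p a'.1)).card
      = (univ.filter p).card - (if p a₀ then 1 else 0) := by
  have h1 : (univ.filter (fun a' : {a : α // a ≠ a₀} => p a'.1)).card = ((univ.filter p).erase a₀).card := by
    apply Finset.card_nbij (i := fun a' => a'.1)
    · intro a' ha'
      simp only [mem_coe, mem_filter, mem_univ, true_and] at ha'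
      simp only [mem_coe, mem_erase, mem_filter, mem_univ, true_and]
      exact ⟨a'.2, ha'⟩
    · intro x _ y _ hxy; exact Subtype.ext hxy
    · intro a ha
      simp only [coe_erase, Set.mem_diff, mem_coe, mem_filter, mem_univ, true_and,
        Set.mem_singleton_iff] at ha
      exact ⟨⟨a, ha.2⟩, by simp [ha.1], rfl⟩
  rw [h1]
  by_cases hp : p a₀
  · rw [if_pos hp, Finset.card_erase_of_mem (by simp [hp])]
  · rw [if_neg hp, Finset.erase_eq_of_notMem (by simp [hp]), Nat.sub_zero]

lemma count_col {n : ℕ} : ∀ (N : ℕ) (α : Type) [Fintype α] [DecidableEq α] (χ : α → Fin n),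
    Fintype.card α = N → ∀ (k : ℕ) (t : Fin k → Fin n → ℕ),
    (∀ i, ∑ j, t j i = (univ.filter (fun a => χ a = i)).card) →
    (∏ j, ∏ i, (t j i).factorial) *
      (univ.filter (fun c : α → Fin k => ∀ (j : Fin k) (i : Fin n),
        (univ.filter (fun a => c a = j ∧ χ a = i)).card = t j i)).card
      = ∏ i, ((univ.filter (fun a => χ a = i)).card).factorial := by
  intro N
  induction N with
  | zero =>
    intro α _ _ χ hN k t ht
    have hemp : IsEmpty α := Fintype.card_eq_zero_iff.mp hN
    have huniv : (univ : Finset α) = ∅ := univ_eq_empty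
    have ht0 : ∀ j i, t j i = 0 := by
      intro j i
      have := ht i
      rw [huniv, filter_empty, card_empty] at this
      exact Finset.sum_eq_zero_iff.mp this j (mem_univ j)
    have hfilt : (univ.filter (fun c : α → Fin k => ∀ (j : Fin k) (i : Fin n),
        (univ.filter (fun a => c a = j ∧ χ a = i)).card = t j i)) = univ := by
      apply Finset.filter_true_of_mem
      intro c _ j i
      rw [huniv, filter_empty, card_empty, ht0]
    rw [hfilt, huniv]
    simp [ht0, Finset.card_univ, Fintype.card_fun, hN]
  | succ N IH =>
    intro α _ _ χ hN k t ht
    obtain ⟨a₀⟩ : Nonempty α := Fintype.card_pos_iff.mp (by omega)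
    set i₀ := χ a₀ with hi₀
    clear_value i₀
    set S := univ.filter (fun c : α → Fin k => ∀ (j : Fin k) (i : Fin n),
        (univ.filter (fun a => c a = j ∧ χ a = i)).card = t j i) with hS
    clear_value S
    have hcard' : Fintype.card {a : α // a ≠ a₀} = N := by
      have h2 := Fintype.card_subtype_compl (fun a' : α => a' = a₀)
      rw [Fintype.card_subtype_eq, hN] at h2
      simpa using h2
    have hℓpos : (univ.filter (fun a => χ a = i₀)).card ≠ 0 := by
      have hmem : a₀ ∈ univ.filter (fun a => χ a = i₀) := by simp [hi₀]
      exact (Finset.card_pos.mpr ⟨a₀, hmem⟩).ne'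
    have hℓ' : ∀ i, (univ.filter (fun a' : {a : α // a ≠ a₀} => χ a'.1 = i)).card
        = (univ.filter (fun a => χ a = i)).card - (if i = i₀ then 1 else 0) := by
      intro i
      rw [restrict_filter_card a₀ (fun a => χ a = i)]
      by_cases hi : i = i₀
      · rw [if_pos hi, if_pos (by rw [hi, hi₀])]
      · rw [if_neg hi, if_neg (fun h => hi (hi₀.trans h).symm)]
    have main : ∀ j₀ : Fin k,
        (∏ j, ∏ i, (t j i).factorial) * (S.filter (fun c => c a₀ = j₀)).card
          = t j₀ i₀ * ∏ i, ((univ.filter (fun a => χ a = i)).card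
              - (if i = i₀ then 1 else 0)).factorial := by
      intro j₀
      set t' : Fin k → Fin n → ℕ := fun j i => if j = j₀ ∧ i = i₀ then t j i - 1 else t j i
        with ht'def
      clear_value t'
      have key : ∀ (c : α → Fin k), c a₀ = j₀ → ∀ (j : Fin k) (i : Fin n),
          (univ.filter (fun a => c a = j ∧ χ a = i)).card
            = (univ.filter (fun a' : {a : α // a ≠ a₀} => c a'.1 = j ∧ χ a'.1 = i)).card
              + (if j = j₀ ∧ i = i₀ then 1 else 0) := by
        intro c hc0 j i
        rw [restrict_filter_card a₀ (fun a => c a = j ∧ χ a = i)]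
        have hmem : (c a₀ = j ∧ χ a₀ = i) ↔ (j = j₀ ∧ i = i₀) := by
          constructor
          · rintro ⟨h1, h2⟩; rw [← h1, hc0, ← h2, hi₀]; exact ⟨rfl, rfl⟩
          · rintro ⟨h1, h2⟩; rw [h1, h2, hc0, hi₀]; exact ⟨rfl, rfl⟩
        by_cases hji : j = j₀ ∧ i = i₀
        · rw [if_pos hji, if_pos (hmem.mpr hji)]
          have hmem2 : a₀ ∈ univ.filter (fun a => c a = j ∧ χ a = i) := by
            simp only [mem_filter, mem_univ, true_and]; exact hmem.mpr hji
          have := Finset.card_pos.mpr ⟨a₀, hmem2⟩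
          omega
        · rw [if_neg hji, if_neg (fun h => hji (hmem.mp h))]; omega
      by_cases h0 : t j₀ i₀ = 0
      · have hemp : S.filter (fun c => c a₀ = j₀) = ∅ := by
          rw [Finset.eq_empty_iff_forall_notMem]
          intro c hc
          rw [Finset.mem_filter, hS, Finset.mem_filter] at hc
          obtain ⟨⟨-, hcond⟩, hc0⟩ := hc
          have h3 := hcond j₀ i₀
          have hmem2 : a₀ ∈ univ.filter (fun a => c a = j₀ ∧ χ a = i₀) := by
            simp only [mem_filter, mem_univ, true_and]; exact ⟨hc0, hi₀.symm⟩
          have := Finset.card_pos.mpr ⟨a₀, hmem2⟩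
          omega
        rw [hemp, Finset.card_empty, h0]
        ring
      -- main case
      have htpos : 1 ≤ t j₀ i₀ := Nat.pos_of_ne_zero h0
      have hts : ∀ j i, t' j i = if j = j₀ ∧ i = i₀ then t j i - 1 else t j i := by
        intro j i; rw [ht'def]
      have ht'sum : ∀ i, ∑ j, t' j i
          = (univ.filter (fun a' : {a : α // a ≠ a₀} => χ a'.1 = i)).card := by
        intro i
        rw [hℓ' i, ← ht i,
            Finset.sum_eq_sum_sdiff_singleton_add (mem_univ j₀) (fun j => t' j i),
            Finset.sum_eq_sum_sdiff_singleton_add (mem_univ j₀) (fun j => t j i)]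
        have heq : ∑ j ∈ univ \ {j₀}, t' j i = ∑ j ∈ univ \ {j₀}, t j i := by
          apply Finset.sum_congr rfl
          intro j hj
          have hj' : j ≠ j₀ := by simpa using (Finset.mem_sdiff.mp hj).2
          rw [hts, if_neg (fun h => hj' h.1)]
        rw [heq]
        by_cases hi : i = i₀
        · subst hi
          rw [hts, if_pos ⟨rfl, rfl⟩, if_pos rfl]
          omega
        · rw [hts, if_neg (fun h => hi h.2), if_neg hi]
          omega
      have hIH := IH {a : α // a ≠ a₀} (fun a' => χ a'.1) hcard' k t' ht'sum
      beta_reduce at hIH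
      have hbij : (S.filter (fun c => c a₀ = j₀)).card
          = (univ.filter (fun c' : {a : α // a ≠ a₀} → Fin k => ∀ (j : Fin k) (i : Fin n),
              (univ.filter (fun a' => c' a' = j ∧ χ a'.1 = i)).card = t' j i)).card := by
        apply Finset.card_nbij' (i := fun c => fun a' => c a'.1)
          (j := fun c' => fun a => if h : a = a₀ then j₀ else c' ⟨a, h⟩)
        · intro c hc
          rw [Finset.mem_coe, Finset.mem_filter] at hc
          obtain ⟨hcS, hc0⟩ := hc
          rw [hS, Finset.mem_filter] at hcS
          rw [Finset.mem_coe, Finset.mem_filter]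
          refine ⟨mem_univ _, fun j i => ?_⟩
          show (univ.filter (fun a' : {a : α // a ≠ a₀} => c a'.1 = j ∧ χ a'.1 = i)).card = t' j i
          have hk := key c hc0 j i
          have hcond := hcS.2 j i
          rw [hts]
          clear hIH
          by_cases hji : j = j₀ ∧ i = i₀
          · rw [if_pos hji]; rw [if_pos hji] at hk; omega
          · rw [if_neg hji]; rw [if_neg hji] at hk; omega
        · intro c' hc'
          rw [Finset.mem_coe, Finset.mem_filter] at hc'
          rw [Finset.mem_coe, Finset.mem_filter, hS, Finset.mem_filter]
          have hc0 : (fun a => if h : a = a₀ then j₀ else c' ⟨a, h⟩) a₀ = j₀ := by simp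
          refine ⟨⟨mem_univ _, fun j i => ?_⟩, hc0⟩
          have hk := key (fun a => if h : a = a₀ then j₀ else c' ⟨a, h⟩) hc0 j i
          have hrestr : (univ.filter (fun a' : {a : α // a ≠ a₀} =>
              (fun a => if h : a = a₀ then j₀ else c' ⟨a, h⟩) a'.1 = j ∧ χ a'.1 = i))
              = univ.filter (fun a' => c' a' = j ∧ χ a'.1 = i) := by
            apply Finset.filter_congr
            intro a' _
            simp only [dif_neg a'.2, Subtype.coe_eta]
          rw [hrestr] at hk
          have hc2 := hc'.2 j i
          rw [hk, hc2, hts]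
          clear hIH
          by_cases hji : j = j₀ ∧ i = i₀
          · obtain ⟨rfl, rfl⟩ := hji
            rw [if_pos (⟨rfl, rfl⟩ : j = j ∧ i = i), if_pos (⟨rfl, rfl⟩ : j = j ∧ i = i)]
            omega
          · rw [if_neg hji, if_neg hji]; omega
        · intro c hc
          rw [Finset.mem_coe, Finset.mem_filter] at hc
          funext a
          by_cases ha : a = a₀
          · subst ha; simp [hc.2]
          · simp [ha]
        · intro c' _
          funext a'
          simp [a'.2]
      have hsplit : ∀ (u : Fin k → Fin n → ℕ),
          (∏ j, ∏ i, (u j i).factorial)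
            = ((∏ j ∈ univ.erase j₀, ∏ i, (u j i).factorial)
              * ((∏ i ∈ univ.erase i₀, (u j₀ i).factorial) * (u j₀ i₀).factorial)) := by
        intro u
        rw [← Finset.prod_erase_mul univ (fun j => ∏ i, (u j i).factorial) (mem_univ j₀),
            ← Finset.prod_erase_mul univ (fun i => (u j₀ i).factorial) (mem_univ i₀)]
      have e1 : ∏ j ∈ univ.erase j₀, ∏ i, (t j i).factorial
          = ∏ j ∈ univ.erase j₀, ∏ i, (t' j i).factorial := by
        refine Finset.prod_congr rfl fun j hj => Finset.prod_congr rfl fun i _ => ?_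
        rw [hts, if_neg (fun h => (Finset.mem_erase.mp hj).1 h.1)]
      have e2 : ∏ i ∈ univ.erase i₀, (t j₀ i).factorial
          = ∏ i ∈ univ.erase i₀, (t' j₀ i).factorial := by
        refine Finset.prod_congr rfl fun i hi => ?_
        rw [hts, if_neg (fun h => (Finset.mem_erase.mp hi).1 h.2)]
      have e3 : (t j₀ i₀).factorial = t j₀ i₀ * (t' j₀ i₀).factorial := by
        rw [hts, if_pos ⟨rfl, rfl⟩]
        exact (Nat.mul_factorial_pred h0).symm
      calc (∏ j, ∏ i, (t j i).factorial) * (S.filter (fun c => c a₀ = j₀)).card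
          = (t j₀ i₀ * (∏ j, ∏ i, (t' j i).factorial))
              * (univ.filter (fun c' : {a : α // a ≠ a₀} → Fin k => ∀ (j : Fin k) (i : Fin n),
                (univ.filter (fun a' => c' a' = j ∧ χ a'.1 = i)).card = t' j i)).card := by
            rw [hsplit t, hsplit t', e1, e2, e3, hbij]; ring
        _ = t j₀ i₀ * ∏ i, ((univ.filter (fun a => χ a = i)).card
              - (if i = i₀ then 1 else 0)).factorial := by
            rw [mul_assoc, hIH]
            congr 1
            exact Finset.prod_congr rfl fun i _ => by rw [hℓ' i]
    have hScard : S.card = ∑ j₀ : Fin k, (S.filter (fun c => c a₀ = j₀)).card :=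
      Finset.card_eq_sum_card_fiberwise (fun c _ => mem_univ (c a₀))
    rw [hScard, Finset.mul_sum]
    have hstep : ∀ j₀ : Fin k, (∏ j, ∏ i, (t j i).factorial) * (S.filter (fun c => c a₀ = j₀)).card
        = t j₀ i₀ * ∏ i, ((univ.filter (fun a => χ a = i)).card - (if i = i₀ then 1 else 0)).factorial :=
      main
    calc ∑ j₀ : Fin k, (∏ j, ∏ i, (t j i).factorial) * (S.filter (fun c => c a₀ = j₀)).card
        = ∑ j₀ : Fin k, t j₀ i₀ * ∏ i, ((univ.filter (fun a => χ a = i)).card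
            - (if i = i₀ then 1 else 0)).factorial := Finset.sum_congr rfl fun j₀ _ => hstep j₀
      _ = (∑ j₀ : Fin k, t j₀ i₀) * ∏ i, ((univ.filter (fun a => χ a = i)).card
            - (if i = i₀ then 1 else 0)).factorial := by rw [Finset.sum_mul]
      _ = (univ.filter (fun a => χ a = i₀)).card * ∏ i, ((univ.filter (fun a => χ a = i)).card
            - (if i = i₀ then 1 else 0)).factorial := by rw [ht i₀]
      _ = ∏ i, ((univ.filter (fun a => χ a = i)).card).factorial := by
          rw [← Finset.prod_erase_mul univ
                (fun i => ((univ.filter (fun a => χ a = i)).card - (if i = i₀ then 1 else 0)).factorial)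
                (mem_univ i₀),
              ← Finset.prod_erase_mul univ
                (fun i => ((univ.filter (fun a => χ a = i)).card).factorial) (mem_univ i₀)]
          have e4 : ∏ i ∈ univ.erase i₀,
              ((univ.filter (fun a => χ a = i)).card - (if i = i₀ then 1 else 0)).factorial
              = ∏ i ∈ univ.erase i₀, ((univ.filter (fun a => χ a = i)).card).factorial := by
            refine Finset.prod_congr rfl fun i hi => ?_
            rw [if_neg (Finset.mem_erase.mp hi).1, Nat.sub_zero]
          rw [e4, if_pos rfl, ← Nat.mul_factorial_pred hℓpos]
          ring

def mefProf {n : ℕ} {ℓ : Fin n → ℕ} (B : Finset (Σ i : Fin n, Fin (ℓ i))) : Fin n → ℕ :=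
  fun i => (B.filter (fun v => v.1 = i)).card

def mefFib {n k : ℕ} {ℓ : Fin n → ℕ} (c : (Σ i : Fin n, Fin (ℓ i)) → Fin k) (j : Fin k) :
    Finset (Σ i : Fin n, Fin (ℓ i)) := univ.filter (fun v => c v = j)
lemma mefProf_ne_zero {n : ℕ} {ℓ : Fin n → ℕ} {B : Finset (Σ i : Fin n, Fin (ℓ i))}
    (hB : B.Nonempty) : mefProf B ≠ 0 := by
  obtain ⟨v, hv⟩ := hB
  intro h
  have h1 : v ∈ B.filter (fun w => w.1 = v.1) := mem_filter.mpr ⟨hv, rfl⟩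
  have h2 := congrFun h v.1
  simp only [mefProf, Pi.zero_apply, Finset.card_eq_zero] at h2
  rw [h2] at h1
  exact notMem_empty _ h1

lemma mefProf_empty {n : ℕ} {ℓ : Fin n → ℕ} : mefProf (∅ : Finset (Σ i : Fin n, Fin (ℓ i))) = 0 := by
  funext i; simp [mefProf]

lemma card_color {n : ℕ} (ℓ : Fin n → ℕ) (i : Fin n) :
    (univ.filter (fun v : Σ i : Fin n, Fin (ℓ i) => v.1 = i)).card = ℓ i := by
  have : (univ : Finset (Fin (ℓ i))).card
      = (univ.filter (fun v : Σ i : Fin n, Fin (ℓ i) => v.1 = i)).card := by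
    apply Finset.card_nbij (i := fun b => (⟨i, b⟩ : Σ i : Fin n, Fin (ℓ i)))
    · intro b _; simp
    · intro x _ y _ hxy
      simpa using hxy
    · rintro ⟨i', b⟩ hb
      simp only [mem_coe, mem_filter, mem_univ, true_and] at hb
      subst hb
      exact ⟨b, by simp, rfl⟩
  rw [← this, Finset.card_univ, Fintype.card_fin]

lemma sum_mefProf_fib {n k : ℕ} {ℓ : Fin n → ℕ} (c : (Σ i : Fin n, Fin (ℓ i)) → Fin k)
    (i : Fin n) : ∑ j : Fin k, mefProf (mefFib c j) i = ℓ i := by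
  have h1 : ∀ j, mefProf (mefFib c j) i
      = ((univ.filter (fun v : Σ i : Fin n, Fin (ℓ i) => v.1 = i)).filter
          (fun v => c v = j)).card := by
    intro j
    unfold mefProf mefFib
    rw [Finset.filter_filter, Finset.filter_filter]
    congr 1
    apply Finset.filter_congr
    intro v _
    tauto
  calc ∑ j : Fin k, mefProf (mefFib c j) i
      = ∑ j : Fin k, ((univ.filter (fun v : Σ i : Fin n, Fin (ℓ i) => v.1 = i)).filter
          (fun v => c v = j)).card := by exact Finset.sum_congr rfl fun j _ => h1 j
    _ = (univ.filter (fun v : Σ i : Fin n, Fin (ℓ i) => v.1 = i)).card :=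
        (Finset.card_eq_sum_card_fiberwise (fun v _ => mem_univ (c v))).symm
    _ = ℓ i := card_color ℓ i

lemma claimA (K : Type*) [Field K] [CharZero K] (f : (Fin n → ℕ) → K) (m : Fin n →₀ ℕ) (k : ℕ) :
    (∏ i, ((m i).factorial : K)) * MvPowerSeries.coeff m (mvEGF₀ K f ^ k)
      = ∑ c : (Σ i : Fin n, Fin (m i)) → Fin k, ∏ j : Fin k,
          (if mefProf (mefFib c j) = 0 then 0 else f (mefProf (mefFib c j))) := by
  classical
  -- the profile map
  set Φ : ((Σ i : Fin n, Fin (m i)) → Fin k) → (ℕ →₀ (Fin n →₀ ℕ)) := fun c =>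
    Finsupp.onFinset (range k)
      (fun j => if h : j < k then Finsupp.equivFunOnFinite.symm (mefProf (mefFib c ⟨j, h⟩)) else 0)
      (fun j hj => by
        by_contra hjk
        exact hj (dif_neg (fun h => hjk (mem_range.mpr h)))) with hΦ
  have hΦapply : ∀ c (j : Fin k), Φ c j.val = Finsupp.equivFunOnFinite.symm (mefProf (mefFib c j)) := by
    intro c j
    show (if h : j.val < k then _ else _) = _
    rw [dif_pos j.isLt]
  have hΦmaps : ∀ c, Φ c ∈ Finset.finsuppAntidiag (range k) m := by
    intro c
    rw [Finset.mem_finsuppAntidiag]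
    refine ⟨?_, Finsupp.support_onFinset_subset⟩
    ext i
    rw [Finset.sum_apply']
    rw [← Fin.sum_univ_eq_sum_range (fun j => (Φ c j) i) k]
    calc ∑ j : Fin k, (Φ c j.val) i
        = ∑ j : Fin k, mefProf (mefFib c j) i := by
          refine Finset.sum_congr rfl fun j _ => ?_
          rw [hΦapply c j]
          rfl
      _ = m i := sum_mefProf_fib c i
  -- group the RHS sum by profile
  rw [MvPowerSeries.coeff_pow]
  rw [← Finset.sum_fiberwise_of_maps_to (fun c _ => hΦmaps c)
    (fun c => ∏ j : Fin k, (if mefProf (mefFib c j) = 0 then 0 else f (mefProf (mefFib c j))))]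
  rw [Finset.mul_sum]
  refine Finset.sum_congr rfl fun l hl => ?_
  obtain ⟨hlsum, hlsupp⟩ := Finset.mem_finsuppAntidiag.mp hl
  -- characterize the fiber
  have hfib : ∀ c, Φ c = l ↔ (∀ (j : Fin k) (i : Fin n),
      (univ.filter (fun a : Σ i : Fin n, Fin (m i) => c a = j ∧ a.1 = i)).card = l j.val i) := by
    intro c
    constructor
    · intro h j i
      have := congrArg (fun F : ℕ →₀ (Fin n →₀ ℕ) => F j.val i) h
      rw [hΦapply c j] at this
      have h2 : mefProf (mefFib c j) i = l j.val i := this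
      rw [← h2]
      unfold mefProf mefFib
      rw [Finset.filter_filter]
    · intro h
      ext j' i
      by_cases hj' : j' < k
      · have h2 : (Φ c) j' = (Φ c) ((⟨j', hj'⟩ : Fin k) : ℕ) := rfl
        rw [h2, hΦapply c ⟨j', hj'⟩]
        have h3 : mefProf (mefFib c ⟨j', hj'⟩) i = l j' i := by
          rw [← h ⟨j', hj'⟩ i]
          unfold mefProf mefFib
          rw [Finset.filter_filter]
        exact h3
      · have h2 : (Φ c) j' = 0 := by
          show (if h : j' < k then _ else _) = _
          rw [dif_neg hj']
        rw [h2]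
        have h3 : l j' = 0 := by
          by_contra h4
          exact hj' (mem_range.mp (hlsupp (Finsupp.mem_support_iff.mpr h4)))
        rw [h3]
  -- constant value on the fiber
  have hval : ∀ c, Φ c = l → (∏ j : Fin k, (if mefProf (mefFib c j) = 0 then 0
      else f (mefProf (mefFib c j))))
      = ∏ j ∈ range k, (if (l j : Fin n → ℕ) = 0 then 0 else f (l j)) := by
    intro c hc
    rw [← Fin.prod_univ_eq_prod_range (fun j => (if (l j : Fin n → ℕ) = 0 then 0 else f (l j))) k]
    refine Finset.prod_congr rfl fun j _ => ?_
    have h1 : mefProf (mefFib c j) = (l j.val : Fin n → ℕ) := by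
      rw [← hc, hΦapply c j]
      rfl
    rw [h1]
  -- now compute both sides
  have hconst : ∑ c ∈ univ.filter (fun c => Φ c = l),
      (∏ j : Fin k, (if mefProf (mefFib c j) = 0 then 0 else f (mefProf (mefFib c j))))
      = ((univ.filter (fun c : (Σ i : Fin n, Fin (m i)) → Fin k => Φ c = l)).card : K)
        * ∏ j ∈ range k, (if (l j : Fin n → ℕ) = 0 then 0 else f (l j)) := by
    rw [Finset.sum_congr rfl (fun c hc => hval c (Finset.mem_filter.mp hc).2),
      Finset.sum_const, nsmul_eq_mul]
  rw [hconst]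
  -- the counting identity
  have hcount : (∏ j ∈ range k, ∏ i, ((l j) i).factorial) *
      (univ.filter (fun c : (Σ i : Fin n, Fin (m i)) → Fin k => Φ c = l)).card
      = ∏ i, (m i).factorial := by
    have hcc := count_col (Fintype.card (Σ i : Fin n, Fin (m i))) (Σ i : Fin n, Fin (m i))
      (fun a => a.1) rfl k (fun j i => (l j.val) i) ?_
    · rw [← Fin.prod_univ_eq_prod_range (fun j => ∏ i, ((l j) i).factorial) k]
      have hsets : (univ.filter (fun c : (Σ i : Fin n, Fin (m i)) → Fin k =>
          ∀ (j : Fin k) (i : Fin n),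
            (univ.filter (fun a => c a = j ∧ a.1 = i)).card = (l j.val) i))
          = univ.filter (fun c => Φ c = l) := by
        apply Finset.filter_congr
        intro c _
        exact (hfib c).symm
      rw [hsets] at hcc
      rw [hcc]
      exact Finset.prod_congr rfl fun i _ => by rw [card_color (fun i => m i) i]
    · intro i
      rw [card_color (fun i => m i) i]
      have h5 := congrFun (congrArg (fun F : Fin n →₀ ℕ => (F : Fin n → ℕ)) hlsum) i
      rw [← h5]
      rw [show (((range k).sum ⇑l : Fin n →₀ ℕ) : Fin n → ℕ) i = ∑ j ∈ range k, (l j) i from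
        Finset.sum_apply' i]
      rw [← Fin.sum_univ_eq_sum_range (fun j => (l j) i) k]
  have hDn : ((∏ j ∈ range k, ∏ i, (((l j) i).factorial : K))) ≠ 0 := by
    apply Finset.prod_ne_zero_iff.mpr
    intro j _
    apply Finset.prod_ne_zero_iff.mpr
    intro i _
    exact_mod_cast Nat.cast_ne_zero.mpr ((l j i).factorial_ne_zero)
  have hKcount : ((univ.filter (fun c : (Σ i : Fin n, Fin (m i)) → Fin k => Φ c = l)).card : K)
      * (∏ j ∈ range k, ∏ i, (((l j) i).factorial : K)) = ∏ i, (((m i).factorial : K)) := by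
    have := congrArg (Nat.cast : ℕ → K) hcount
    push_cast at this
    rw [← this]
    ring
  by_cases hz : ∀ j ∈ range k, (l j : Fin n → ℕ) ≠ 0
  · have hcoeff : ∀ j ∈ range k, MvPowerSeries.coeff (l j) (mvEGF₀ K f)
        = f (l j) / ∏ i, (((l j) i).factorial : K) := by
      intro j hj
      rw [MvPowerSeries.coeff_apply]
      show (if ((l j : Fin n → ℕ)) = 0 then 0 else f (l j) / ∏ i, (((l j) i).factorial : K)) = _
      rw [if_neg (hz j hj)]
    rw [Finset.prod_congr rfl hcoeff, Finset.prod_div_distrib]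
    rw [Finset.prod_congr rfl (fun j hj => if_neg (hz j hj))]
    rw [← hKcount]
    field_simp
  · push_neg at hz
    obtain ⟨j₀, hj₀, hz0⟩ := hz
    have hL : ∏ j ∈ range k, MvPowerSeries.coeff (l j) (mvEGF₀ K f) = 0 := by
      apply Finset.prod_eq_zero hj₀
      rw [MvPowerSeries.coeff_apply]
      show (if ((l j₀ : Fin n → ℕ)) = 0 then 0 else f (l j₀) / ∏ i, (((l j₀) i).factorial : K)) = 0
      rw [if_pos hz0]
    have hR : ∏ j ∈ range k, (if (l j : Fin n → ℕ) = 0 then 0 else f (l j)) = 0 := by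
      apply Finset.prod_eq_zero hj₀
      rw [if_pos hz0]
    rw [hL, hR, mul_zero, mul_zero]

lemma claimB (K : Type*) [Field K] (f : (Fin n → ℕ) → K) (ℓ : Fin n → ℕ) (k : ℕ) :
    ∑ c : (Σ i : Fin n, Fin (ℓ i)) → Fin k, ∏ j : Fin k,
        (if mefProf (mefFib c j) = 0 then 0 else f (mefProf (mefFib c j)))
      = ∑ π : Finpartition (univ : Finset (Σ i : Fin n, Fin (ℓ i))),
          (if π.parts.card = k then (k.factorial : K) * ∏ B ∈ π.parts, f (mefProf B) else 0) := by
  classical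
  set V := (Σ i : Fin n, Fin (ℓ i)) with hV
  set W : (V → Fin k) → K := fun c => ∏ j : Fin k,
    (if mefProf (mefFib c j) = 0 then 0 else f (mefProf (mefFib c j))) with hW
  set pt : (V → Fin k) → Finpartition (univ : Finset V) := fun c =>
    Finpartition.ofSetoid (Setoid.ker c) with hpt
  have hparts : ∀ c : V → Fin k, (pt c).parts
      = univ.image (fun a => univ.filter (fun b => c a = c b)) := by
    intro c
    show (Finpartition.ofSetoid (Setoid.ker c)).parts = _
    unfold Finpartition.ofSetoid
    rw [Finpartition.ofSetSetoid_parts]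
    congr 1
    funext a
    apply Finset.filter_congr
    intro b _
    exact Iff.rfl
  have ptparts : ∀ c : V → Fin k, (∀ j, (mefFib c j).Nonempty) →
      (pt c).parts = univ.image (fun j : Fin k => mefFib c j) := by
    intro c hne
    rw [hparts]
    ext B
    simp only [Finset.mem_image, mem_univ, true_and]
    constructor
    · rintro ⟨a, rfl⟩
      refine ⟨c a, ?_⟩
      unfold mefFib
      apply Finset.filter_congr
      intro b _
      exact eq_comm
    · rintro ⟨j, rfl⟩
      obtain ⟨a, ha⟩ := hne j
      have hca : c a = j := (Finset.mem_filter.mp ha).2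
      refine ⟨a, ?_⟩
      unfold mefFib
      apply Finset.filter_congr
      intro b _
      rw [hca]
      exact eq_comm
  have hcardk : ∀ c : V → Fin k, (∀ j, (mefFib c j).Nonempty) → (pt c).parts.card = k := by
    intro c hne
    rw [ptparts c hne, Finset.card_image_of_injOn, Finset.card_univ, Fintype.card_fin]
    intro j _ j' _ hjj'
    have hjj2 : mefFib c j = mefFib c j' := hjj'
    obtain ⟨a, ha⟩ := hne j
    have h1 : c a = j := (Finset.mem_filter.mp ha).2
    have h2 : a ∈ mefFib c j' := hjj2 ▸ ha
    have h3 : c a = j' := (Finset.mem_filter.mp h2).2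
    rw [← h1, h3]
  -- drop colorings with an empty fiber
  rw [show ∑ c : V → Fin k, W c = ∑ c ∈ univ.filter
      (fun c : V → Fin k => ∀ j, (mefFib c j).Nonempty), W c from
    (Finset.sum_filter_of_ne (fun c _ hWc => by
      by_contra hne
      push_neg at hne
      obtain ⟨j, hj⟩ := hne
      exact hWc (Finset.prod_eq_zero (mem_univ j)
        (by rw [hj, mefProf_empty, if_pos rfl])))).symm]
  rw [← Finset.sum_fiberwise_of_maps_to (g := pt) (t := univ) (fun c _ => mem_univ (pt c)) W]
  refine Finset.sum_congr rfl fun π _ => ?_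
  by_cases hπ : π.parts.card = k
  · -- main case
    rw [if_pos hπ]
    have hvalue : ∀ c ∈ (univ.filter (fun c : V → Fin k => ∀ j, (mefFib c j).Nonempty)).filter
        (fun c => pt c = π), W c = ∏ B ∈ π.parts, f (mefProf B) := by
      intro c hc
      rw [Finset.mem_filter, Finset.mem_filter] at hc
      obtain ⟨⟨-, hall⟩, hptc⟩ := hc
      rw [hW]
      simp only
      rw [Finset.prod_congr rfl (fun j _ => if_neg (mefProf_ne_zero (hall j)))]
      apply Finset.prod_bij (i := fun j _ => mefFib c j)
      · intro j _
        rw [← hptc, ptparts c hall]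
        exact Finset.mem_image.mpr ⟨j, mem_univ j, rfl⟩
      · intro j _ j' _ hjj'
        obtain ⟨a, ha⟩ := hall j
        have h1 : c a = j := (Finset.mem_filter.mp ha).2
        have h2 : a ∈ mefFib c j' := hjj' ▸ ha
        have h3 : c a = j' := (Finset.mem_filter.mp h2).2
        rw [← h1, h3]
      · intro B hB
        rw [← hptc, ptparts c hall] at hB
        obtain ⟨j, -, rfl⟩ := Finset.mem_image.mp hB
        exact ⟨j, mem_univ j, rfl⟩
      · intro j _
        rfl
    rw [Finset.sum_congr rfl hvalue, Finset.sum_const, nsmul_eq_mul]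
    congr 2
    -- count: the fiber over π has cardinality k!
    have hcount : ((univ.filter (fun c : V → Fin k => ∀ j, (mefFib c j).Nonempty)).filter
        (fun c => pt c = π)).card = Fintype.card (Fin k ↪ {B // B ∈ π.parts}) := by
      rw [← Finset.card_univ]
      apply Finset.card_bij (i := fun c hc => (⟨fun j => ⟨mefFib c j, by
          rw [Finset.mem_filter, Finset.mem_filter] at hc
          rw [← hc.2, ptparts c hc.1.2]
          exact Finset.mem_image.mpr ⟨j, mem_univ j, rfl⟩⟩, by
        rw [Finset.mem_filter, Finset.mem_filter] at hc
        intro j j' hjj'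
        rw [Subtype.mk.injEq] at hjj'
        obtain ⟨a, ha⟩ := hc.1.2 j
        have h1 : c a = j := (Finset.mem_filter.mp ha).2
        have h2 : a ∈ mefFib c j' := hjj' ▸ ha
        have h3 : c a = j' := (Finset.mem_filter.mp h2).2
        rw [← h1, h3]⟩ : Fin k ↪ {B // B ∈ π.parts}))
      · intro c hc
        exact mem_univ _
      · intro c hc c' hc' hcc'
        have hfib : ∀ j, mefFib c j = mefFib c' j := by
          intro j
          have := congrArg (fun (e : Fin k ↪ {B // B ∈ π.parts}) => ((e j : {B // B ∈ π.parts}) : Finset V)) hcc'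
          exact this
        funext v
        have h1 : v ∈ mefFib c (c v) := Finset.mem_filter.mpr ⟨mem_univ v, rfl⟩
        rw [hfib (c v)] at h1
        exact ((Finset.mem_filter.mp h1).2).symm
      · intro e _
        have hbij : Function.Bijective (fun j => (e j : {B // B ∈ π.parts})) := by
          rw [Fintype.bijective_iff_injective_and_card]
          refine ⟨e.injective, ?_⟩
          rw [Fintype.card_fin, Fintype.card_coe, hπ]
        set E := Equiv.ofBijective _ hbij with hE
        set c : V → Fin k := fun v => E.symm ⟨π.part v, π.part_mem.2 (mem_univ v)⟩ with hc
        have hfibe : ∀ j, mefFib c j = ((e j : {B // B ∈ π.parts}) : Finset V) := by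
          intro j
          ext v
          constructor
          · intro hv
            have h1 : c v = j := (Finset.mem_filter.mp hv).2
            have h2 : (⟨π.part v, π.part_mem.2 (mem_univ v)⟩ : {B // B ∈ π.parts}) = E j := by
              rw [← h1]
              exact (E.apply_symm_apply ⟨π.part v, π.part_mem.2 (mem_univ v)⟩).symm
            have h3 : π.part v = ((e j : {B // B ∈ π.parts}) : Finset V) :=
              congrArg Subtype.val h2
            rw [← h3]
            exact π.mem_part (mem_univ v)
          · intro hv
            have h3 : π.part v = ((e j : {B // B ∈ π.parts}) : Finset V) :=
              π.eq_of_mem_parts (π.part_mem.2 (mem_univ v)) (e j).2 (π.mem_part (mem_univ v)) hv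
            have h2 : (⟨π.part v, π.part_mem.2 (mem_univ v)⟩ : {B // B ∈ π.parts}) = E j :=
              Subtype.ext h3
            refine Finset.mem_filter.mpr ⟨mem_univ v, ?_⟩
            show E.symm ⟨π.part v, π.part_mem.2 (mem_univ v)⟩ = j
            rw [h2]
            exact E.symm_apply_apply j
        have hall : ∀ j, (mefFib c j).Nonempty := by
          intro j
          rw [hfibe j]
          exact π.nonempty_of_mem_parts (e j).2
        have hptc : pt c = π := by
          apply Finpartition.ext
          rw [ptparts c hall]
          ext B
          simp only [Finset.mem_image, mem_univ, true_and]
          constructor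
          · rintro ⟨j, rfl⟩
            rw [hfibe j]
            exact (e j).2
          · intro hB
            obtain ⟨j, hj⟩ := E.surjective ⟨B, hB⟩
            exact ⟨j, (hfibe j).trans (congrArg Subtype.val hj)⟩
        refine ⟨c, ?_, ?_⟩
        · rw [Finset.mem_filter, Finset.mem_filter]
          exact ⟨⟨mem_univ _, hall⟩, hptc⟩
        · apply DFunLike.ext
          intro j
          exact Subtype.ext (hfibe j)
    rw [hcount, Fintype.card_embedding_eq, Fintype.card_coe, hπ, Fintype.card_fin,
      Nat.descFactorial_self]
  · rw [if_neg hπ]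
    rw [Finset.sum_eq_zero]
    intro c hc
    rw [Finset.mem_filter, Finset.mem_filter] at hc
    exact absurd (hc.2 ▸ hcardk c hc.1.2) hπ

/-- **Multivariate Exponential Formula.**  Let `K` be a field of characteristic
zero and `f : ℕⁿ \ {0} → K`.  Define `g : ℕⁿ → K` by `g(0) = 1` and, for
disjoint finite sets `V₁, …, V_n` (realized as the fibres of
`Σ i, Fin (ℓ i)`) not all empty,
`g(|V₁|,…,|V_n|) = ∑_{π} ∏_{B ∈ π} f(|B ∩ V₁|, …, |B ∩ V_n|)`, the sum being
over all set partitions `π` of `V₁ ∪ ⋯ ∪ V_n`.  Then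
`log E_g = E_f` in `K[[X₁,…,X_n]]`; equivalently (applying `exp`),
each coefficient of `E_g` equals the corresponding coefficient of
`∑_k E_f^k / k!` (a finite sum in each degree). -/
theorem multivariate_exponential_formula {n : ℕ} (K : Type*) [Field K] [CharZero K]
    (f g : (Fin n → ℕ) → K)
    (hg0 : g 0 = 1)
    (hg : ∀ ℓ : Fin n → ℕ, ℓ ≠ 0 →
      g ℓ = ∑ π : Finpartition (Finset.univ : Finset (Σ i : Fin n, Fin (ℓ i))),
              ∏ B ∈ π.parts, f (fun i => (B.filter (fun v => v.1 = i)).card)) :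
    ∀ m : Fin n →₀ ℕ,
      MvPowerSeries.coeff m (mvEGF K g) =
        ∑ k ∈ Finset.range (m.sum (fun _ e => e) + 1),
          (k.factorial : K)⁻¹ * MvPowerSeries.coeff m (mvEGF₀ K f ^ k) := by
  intro m
  by_cases hm : (m : Fin n → ℕ) = 0
  · -- zero case
    have hm0 : m = 0 := by
      ext i
      exact congrFun hm i
    subst hm0
    rw [MvPowerSeries.coeff_apply]
    show g (0 : Fin n →₀ ℕ) / ∏ i, (((0 : Fin n →₀ ℕ) i).factorial : K) = _
    have h1 : ((0 : Fin n →₀ ℕ).sum (fun _ e => e)) = 0 := by simp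
    rw [h1]
    rw [Finset.sum_range_one, pow_zero, MvPowerSeries.coeff_one, if_pos rfl]
    have h2 : g ((0 : Fin n →₀ ℕ) : Fin n → ℕ) = 1 := by
      rw [show (((0 : Fin n →₀ ℕ)) : Fin n → ℕ) = 0 from rfl, hg0]
    rw [h2]
    simp
  · -- nonzero case
    have hmfact : (∏ i, ((m i).factorial : K)) ≠ 0 := by
      apply Finset.prod_ne_zero_iff.mpr
      intro i _
      exact_mod_cast Nat.cast_ne_zero.mpr (m i).factorial_ne_zero
    have hN : Fintype.card (Σ i : Fin n, Fin (m i)) = m.sum (fun _ e => e) := by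
      rw [Fintype.card_sigma]
      simp only [Fintype.card_fin]
      rw [Finsupp.sum_fintype _ _ (fun i => rfl)]
    have hcoeff : ∀ k, MvPowerSeries.coeff m (mvEGF₀ K f ^ k)
        = (∏ i, ((m i).factorial : K))⁻¹
          * ∑ π : Finpartition (univ : Finset (Σ i : Fin n, Fin (m i))),
            (if π.parts.card = k then (k.factorial : K) * ∏ B ∈ π.parts, f (mefProf B) else 0) := by
      intro k
      rw [← claimB K f (fun i => m i) k, ← claimA K f m k]
      rw [inv_mul_cancel_left₀ hmfact]
    rw [MvPowerSeries.coeff_apply]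
    show g (m : Fin n → ℕ) / ∏ i, ((m i).factorial : K) = _
    rw [hg (m : Fin n → ℕ) hm]
    calc (∑ π : Finpartition (univ : Finset (Σ i : Fin n, Fin ((m : Fin n → ℕ) i))),
            ∏ B ∈ π.parts, f (fun i => (B.filter (fun v => v.1 = i)).card))
          / ∏ i, ((m i).factorial : K)
        = (∏ i, ((m i).factorial : K))⁻¹
            * ∑ π : Finpartition (univ : Finset (Σ i : Fin n, Fin (m i))),
              ∏ B ∈ π.parts, f (mefProf B) := by
          rw [div_eq_mul_inv, mul_comm]
          rfl
      _ = ∑ k ∈ Finset.range (m.sum (fun _ e => e) + 1),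
            (k.factorial : K)⁻¹ * MvPowerSeries.coeff m (mvEGF₀ K f ^ k) := by
          refine Eq.symm ?_
          calc ∑ k ∈ Finset.range (m.sum (fun _ e => e) + 1),
                (k.factorial : K)⁻¹ * MvPowerSeries.coeff m (mvEGF₀ K f ^ k)
              = ∑ k ∈ Finset.range (m.sum (fun _ e => e) + 1),
                  ∑ π : Finpartition (univ : Finset (Σ i : Fin n, Fin (m i))),
                    (∏ i, ((m i).factorial : K))⁻¹ * ((k.factorial : K)⁻¹ *
                      (if π.parts.card = k then (k.factorial : K)
                        * ∏ B ∈ π.parts, f (mefProf B) else 0)) := by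
                refine Finset.sum_congr rfl fun k _ => ?_
                rw [hcoeff k, Finset.mul_sum, Finset.mul_sum]
                refine Finset.sum_congr rfl fun π _ => ?_
                ring
            _ = ∑ π : Finpartition (univ : Finset (Σ i : Fin n, Fin (m i))),
                  ∑ k ∈ Finset.range (m.sum (fun _ e => e) + 1),
                    (∏ i, ((m i).factorial : K))⁻¹ * ((k.factorial : K)⁻¹ *
                      (if π.parts.card = k then (k.factorial : K)
                        * ∏ B ∈ π.parts, f (mefProf B) else 0)) := Finset.sum_comm
            _ = ∑ π : Finpartition (univ : Finset (Σ i : Fin n, Fin (m i))),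
                  (∏ i, ((m i).factorial : K))⁻¹ * ∏ B ∈ π.parts, f (mefProf B) := by
                refine Finset.sum_congr rfl fun π _ => ?_
                rw [← Finset.mul_sum]
                congr 1
                have hmem : π.parts.card ∈ Finset.range (m.sum (fun _ e => e) + 1) := by
                  rw [Finset.mem_range]
                  have h3 := π.card_parts_le_card
                  rw [Finset.card_univ, hN] at h3
                  omega
                have hmerge : ∀ k : ℕ, (k.factorial : K)⁻¹ *
                    (if π.parts.card = k then (k.factorial : K)
                      * ∏ B ∈ π.parts, f (mefProf B) else 0)
                    = (if π.parts.card = k then ((k.factorial : K)⁻¹ * ((k.factorial : K)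
                        * ∏ B ∈ π.parts, f (mefProf B))) else 0) := by
                  intro k
                  by_cases h : π.parts.card = k
                  · rw [if_pos h, if_pos h]
                  · rw [if_neg h, if_neg h, mul_zero]
                rw [Finset.sum_congr rfl fun k _ => hmerge k]
                rw [Finset.sum_ite_eq, if_pos hmem, ← mul_assoc,
                  inv_mul_cancel₀
                    (by exact_mod_cast Nat.cast_ne_zero.mpr π.parts.card.factorial_ne_zero),
                  one_mul]
            _ = (∏ i, ((m i).factorial : K))⁻¹
                  * ∑ π : Finpartition (univ : Finset (Σ i : Fin n, Fin (m i))),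
                    ∏ B ∈ π.parts, f (mefProf B) := (Finset.mul_sum _ _ _).symm
end

section
/- Mahler-type expansion (single variable case): If f ∈ ℚ(q)[x] is a polynomial in x over ℚ(q) such that f(q^b) ∈ ℤ[q] for every nonnegative integer b, then there exist polynomials c_ℓ(q) ∈ ℤ[q], all but finitely many zero, with f(x) = ∑_{ℓ≥0} c_ℓ(q) ⟨x choose ℓ⟩_q, where ⟨x choose ℓ⟩_q := ∏_{i=1}^{ℓ} (x/q^{i-1} - 1)/(q^i - 1). -/
open Finset Polynomial

/-- The generalized q-binomial `⟨x choose ℓ⟩_q := ∏_{i=1}^{ℓ} (x/q^{i-1} - 1)/(q^i - 1)`,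
a polynomial in `x` over `ℚ(q)` (here `q` is `RatFunc.X`). -/
noncomputable def angleBinom (ℓ : ℕ) : Polynomial (RatFunc ℚ) :=
  ∏ i ∈ Finset.range ℓ,
    Polynomial.C (((RatFunc.X : RatFunc ℚ) ^ (i + 1) - 1)⁻¹) *
      (Polynomial.C (((RatFunc.X : RatFunc ℚ) ^ i)⁻¹) * Polynomial.X - 1)

/-- An element of `ℚ(q)` "is an integral polynomial in `q`". -/
def IsIntPoly (r : RatFunc ℚ) : Prop :=
  ∃ p : Polynomial ℤ, r = algebraMap (Polynomial ℚ) (RatFunc ℚ) (p.map (Int.castRingHom ℚ))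

namespace MahlerAux

noncomputable abbrev q : RatFunc ℚ := RatFunc.X

lemma q_ne_zero : (q : RatFunc ℚ) ≠ 0 := RatFunc.X_ne_zero

lemma q_pow_ne_zero (m : ℕ) : (q : RatFunc ℚ) ^ m ≠ 0 := pow_ne_zero _ q_ne_zero

lemma q_pow_sub_one_ne_zero (m : ℕ) : (q : RatFunc ℚ) ^ (m + 1) - 1 ≠ 0 := by
  have h1 : (q : RatFunc ℚ) ^ (m + 1) - 1
      = algebraMap (Polynomial ℚ) (RatFunc ℚ) (X ^ (m + 1) - C 1) := by
    simp [map_sub, map_pow, RatFunc.algebraMap_X]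
  rw [h1, Ne, map_eq_zero_iff _ (RatFunc.algebraMap_injective ℚ)]
  exact X_pow_sub_C_ne_zero (Nat.succ_pos m) 1

/-- Numerator-product form of the evaluation of `angleBinom ℓ` at `q^b`. -/
noncomputable def Eb (b ℓ : ℕ) : RatFunc ℚ :=
  ∏ i ∈ Finset.range ℓ,
    ((q ^ (i + 1) - 1)⁻¹ * (q ^ i)⁻¹ * (q ^ b - q ^ i))

lemma eval_angleBinom (b ℓ : ℕ) : (angleBinom ℓ).eval (q ^ b) = Eb b ℓ := by
  rw [angleBinom, Polynomial.eval_prod, Eb]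
  refine Finset.prod_congr rfl fun i _ => ?_
  simp only [eval_mul, eval_sub, eval_C, eval_X, eval_one]
  have hq : (q : RatFunc ℚ) ^ i ≠ 0 := q_pow_ne_zero i
  field_simp

noncomputable def U (ℓ : ℕ) : RatFunc ℚ :=
  ∏ i ∈ Finset.range ℓ, ((q ^ (i + 1) - 1)⁻¹ * (q ^ i)⁻¹)

noncomputable def Nn (b ℓ : ℕ) : RatFunc ℚ := ∏ i ∈ Finset.range ℓ, (q ^ b - q ^ i)

lemma Eb_eq (b ℓ : ℕ) : Eb b ℓ = U ℓ * Nn b ℓ := by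
  rw [Eb, U, Nn, ← Finset.prod_mul_distrib]

lemma U_succ (ℓ : ℕ) : U ℓ = U (ℓ + 1) * ((q ^ (ℓ + 1) - 1) * q ^ ℓ) := by
  have h : U (ℓ + 1) = U ℓ * ((q ^ (ℓ + 1) - 1)⁻¹ * (q ^ ℓ)⁻¹) :=
    Finset.prod_range_succ _ _
  have h1 := q_pow_sub_one_ne_zero ℓ
  have h2 := q_pow_ne_zero ℓ
  rw [h]
  field_simp

lemma Nn_succ (b ℓ : ℕ) : Nn b (ℓ + 1) = Nn b ℓ * (q ^ b - q ^ ℓ) :=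
  Finset.prod_range_succ _ _

lemma Nn_shift (b ℓ : ℕ) : Nn (b + 1) (ℓ + 1) = (q ^ (b + 1) - 1) * (q ^ ℓ * Nn b ℓ) := by
  rw [Nn, Finset.prod_range_succ']
  have h : ∀ i ∈ Finset.range ℓ, q ^ (b + 1) - q ^ (i + 1) = q * (q ^ b - q ^ i) := by
    intro i _; ring
  rw [Finset.prod_congr rfl h, Finset.prod_mul_distrib, Finset.prod_const,
    Finset.card_range, Nn]
  ring

lemma Eb_rec (b ℓ : ℕ) : Eb (b + 1) (ℓ + 1) = Eb b ℓ + q ^ (ℓ + 1) * Eb b (ℓ + 1) := by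
  simp only [Eb_eq]
  rw [Nn_shift, Nn_succ, U_succ ℓ]
  ring

lemma Eb_zero (b : ℕ) : Eb b 0 = 1 := by simp [Eb]

lemma Eb_zero_succ (ℓ : ℕ) : Eb 0 (ℓ + 1) = 0 := by
  apply Finset.prod_eq_zero (Finset.mem_range.mpr (Nat.succ_pos ℓ))
  simp

/-- Gaussian binomial `[b, ℓ]_q` as an integer polynomial in `q`. -/
noncomputable def gb : ℕ → ℕ → Polynomial ℤ
  | _, 0 => 1
  | 0, _ + 1 => 0
  | b + 1, ℓ + 1 => gb b ℓ + X ^ (ℓ + 1) * gb b (ℓ + 1)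

lemma gb_eq_zero : ∀ b ℓ : ℕ, b < ℓ → gb b ℓ = 0
  | 0, ℓ + 1, _ => rfl
  | b + 1, ℓ + 1, h => by
    rw [gb, gb_eq_zero b ℓ (by omega), gb_eq_zero b (ℓ + 1) (by omega)]
    simp

lemma gb_diag : ∀ b : ℕ, gb b b = 1
  | 0 => rfl
  | b + 1 => by
    rw [gb, gb_diag b, gb_eq_zero b (b + 1) (by omega)]
    simp

noncomputable def φ : Polynomial ℤ → RatFunc ℚ :=
  fun p => algebraMap (Polynomial ℚ) (RatFunc ℚ) (p.map (Int.castRingHom ℚ))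

lemma φ_add (p p' : Polynomial ℤ) : φ (p + p') = φ p + φ p' := by
  simp [φ, Polynomial.map_add, map_add]

lemma φ_mul (p p' : Polynomial ℤ) : φ (p * p') = φ p * φ p' := by
  simp [φ, Polynomial.map_mul, map_mul]

lemma φ_one : φ 1 = 1 := by simp [φ]

lemma φ_zero : φ 0 = 0 := by simp [φ]

lemma φ_X_pow (m : ℕ) : φ (X ^ m) = q ^ m := by
  simp [φ, Polynomial.map_pow, map_pow, RatFunc.algebraMap_X]

lemma gb_map : ∀ b ℓ : ℕ, φ (gb b ℓ) = Eb b ℓ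
  | b, 0 => by rw [gb, φ_one, Eb_zero]
  | 0, ℓ + 1 => by rw [gb, φ_zero, Eb_zero_succ]
  | b + 1, ℓ + 1 => by
    rw [gb, φ_add, φ_mul, φ_X_pow, gb_map b ℓ, gb_map b (ℓ + 1), Eb_rec]

lemma Eb_int (b ℓ : ℕ) : IsIntPoly (Eb b ℓ) := ⟨gb b ℓ, (gb_map b ℓ).symm⟩

lemma Eb_diag (b : ℕ) : Eb b b = 1 := by rw [← gb_map, gb_diag, φ_one]

lemma Eb_eq_zero (b ℓ : ℕ) (h : b < ℓ) : Eb b ℓ = 0 := by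
  rw [← gb_map, gb_eq_zero b ℓ h, φ_zero]

lemma isIntPoly_add {r s : RatFunc ℚ} : IsIntPoly r → IsIntPoly s → IsIntPoly (r + s) :=
  fun ⟨p, hp⟩ ⟨p', hp'⟩ => ⟨p + p', by rw [hp, hp']; simp [Polynomial.map_add, map_add]⟩

lemma isIntPoly_mul {r s : RatFunc ℚ} : IsIntPoly r → IsIntPoly s → IsIntPoly (r * s) :=
  fun ⟨p, hp⟩ ⟨p', hp'⟩ => ⟨p * p', by rw [hp, hp']; simp [Polynomial.map_mul, map_mul]⟩

lemma isIntPoly_zero : IsIntPoly 0 := ⟨0, by simp⟩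

lemma isIntPoly_sub {r s : RatFunc ℚ} : IsIntPoly r → IsIntPoly s → IsIntPoly (r - s) :=
  fun ⟨p, hp⟩ ⟨p', hp'⟩ => ⟨p - p', by rw [hp, hp']; simp [Polynomial.map_sub, map_sub]⟩

lemma isIntPoly_sum {ι : Type*} (s : Finset ι) (g : ι → RatFunc ℚ)
    (h : ∀ i ∈ s, IsIntPoly (g i)) : IsIntPoly (∑ i ∈ s, g i) :=
  Finset.sum_induction g IsIntPoly (fun _ _ => isIntPoly_add) isIntPoly_zero h

/-- degree facts -/
lemma angle_factor (i : ℕ) :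
    Polynomial.C ((q ^ (i + 1) - 1)⁻¹) * (Polynomial.C ((q ^ i)⁻¹) * Polynomial.X - 1)
    = C ((q ^ (i + 1) - 1)⁻¹ * (q ^ i)⁻¹) * X + C (-(q ^ (i + 1) - 1)⁻¹) := by
  rw [map_mul, map_neg]
  ring

lemma angle_coeff_ne (i : ℕ) : ((q : RatFunc ℚ) ^ (i + 1) - 1)⁻¹ * (q ^ i)⁻¹ ≠ 0 :=
  mul_ne_zero (inv_ne_zero (q_pow_sub_one_ne_zero i)) (inv_ne_zero (q_pow_ne_zero i))

lemma angle_factor_ne_zero (i : ℕ) :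
    Polynomial.C ((q ^ (i + 1) - 1)⁻¹) * (Polynomial.C ((q ^ i)⁻¹) * Polynomial.X - 1) ≠ 0 := by
  rw [angle_factor]
  intro h
  apply angle_coeff_ne i
  have h2 := congrArg (fun p => Polynomial.coeff p 1) h
  simpa using h2

lemma angle_natDegree (ℓ : ℕ) : (angleBinom ℓ).natDegree = ℓ := by
  rw [angleBinom]
  rw [Polynomial.natDegree_prod _ _ (fun i _ => angle_factor_ne_zero i)]
  trans ∑ i ∈ Finset.range ℓ, 1
  · refine Finset.sum_congr rfl fun i _ => ?_
    rw [angle_factor]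
    exact natDegree_linear (angle_coeff_ne i)
  · simp

lemma angle_ne_zero (ℓ : ℕ) : angleBinom ℓ ≠ 0 := by
  rw [angleBinom]
  exact Finset.prod_ne_zero_iff.mpr fun i _ => angle_factor_ne_zero i

lemma angle_lead_ne (ℓ : ℕ) : (angleBinom ℓ).coeff ℓ ≠ 0 := by
  have h : (angleBinom ℓ).coeff ℓ = (angleBinom ℓ).leadingCoeff := by
    rw [Polynomial.leadingCoeff, angle_natDegree]
  rw [h]
  exact leadingCoeff_ne_zero.mpr (angle_ne_zero ℓ)

lemma exists_rep : ∀ n : ℕ, ∀ f : Polynomial (RatFunc ℚ), f.natDegree ≤ n →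
    ∃ d : ℕ → RatFunc ℚ, f = ∑ ℓ ∈ Finset.range (n + 1), C (d ℓ) * angleBinom ℓ := by
  intro n
  induction n with
  | zero =>
    intro f hf
    refine ⟨fun _ => f.coeff 0, ?_⟩
    rw [Polynomial.eq_C_of_natDegree_le_zero hf]
    simp [angleBinom]
  | succ n ih =>
    intro f hf
    have hAl := angle_lead_ne (n + 1)
    have hg : (f - C (f.coeff (n + 1) / (angleBinom (n + 1)).coeff (n + 1)) *
        angleBinom (n + 1)).natDegree ≤ n := by
      apply Polynomial.natDegree_le_iff_coeff_eq_zero.mpr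
      intro m hm
      rw [Polynomial.coeff_sub, Polynomial.coeff_C_mul]
      rcases eq_or_lt_of_le (Nat.succ_le_of_lt hm) with h | h
      · rw [← h, div_mul_cancel₀ _ hAl, sub_self]
      · have h1 : f.coeff m = 0 :=
          Polynomial.coeff_eq_zero_of_natDegree_lt (lt_of_le_of_lt hf h)
        have h2 : (angleBinom (n + 1)).coeff m = 0 :=
          Polynomial.coeff_eq_zero_of_natDegree_lt (by rw [angle_natDegree]; exact h)
        simp [h1, h2]
    obtain ⟨d, hd⟩ := ih _ hg
    refine ⟨fun ℓ => if ℓ = n + 1 then f.coeff (n + 1) / (angleBinom (n + 1)).coeff (n + 1)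
      else d ℓ, ?_⟩
    rw [Finset.sum_range_succ]
    have hcongr : ∑ ℓ ∈ Finset.range (n + 1),
        C (if ℓ = n + 1 then f.coeff (n + 1) / (angleBinom (n + 1)).coeff (n + 1)
          else d ℓ) * angleBinom ℓ
        = ∑ ℓ ∈ Finset.range (n + 1), C (d ℓ) * angleBinom ℓ := by
      refine Finset.sum_congr rfl fun ℓ hℓ => ?_
      rw [if_neg (by simp at hℓ; omega)]
    rw [hcongr, ← hd]
    simp

end MahlerAux

/-- **Mahler-type expansion.**  If `f ∈ ℚ(q)[x]` satisfies `f(q^b) ∈ ℤ[q]` for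
every nonnegative integer `b`, then there are polynomials `c_ℓ(q) ∈ ℤ[q]`, all
but finitely many zero, with `f(x) = ∑_ℓ c_ℓ(q) ⟨x choose ℓ⟩_q`. -/
theorem mahler_type_expansion (f : Polynomial (RatFunc ℚ))
    (hf : ∀ b : ℕ, IsIntPoly (f.eval ((RatFunc.X : RatFunc ℚ) ^ b))) :
    ∃ (c : ℕ → Polynomial ℤ) (N : ℕ), (∀ ℓ, N ≤ ℓ → c ℓ = 0) ∧
      f = ∑ ℓ ∈ Finset.range N,
        Polynomial.C (algebraMap (Polynomial ℚ) (RatFunc ℚ)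
          ((c ℓ).map (Int.castRingHom ℚ))) * angleBinom ℓ := by
  classical
  open MahlerAux in
  obtain ⟨d, hd⟩ := MahlerAux.exists_rep f.natDegree f le_rfl
  set n := f.natDegree with hn
  have heval : ∀ b : ℕ, f.eval ((RatFunc.X : RatFunc ℚ) ^ b)
      = ∑ ℓ ∈ Finset.range (n + 1), d ℓ * MahlerAux.Eb b ℓ := by
    intro b
    rw [hd, Polynomial.eval_finset_sum]
    refine Finset.sum_congr rfl fun ℓ _ => ?_
    rw [Polynomial.eval_mul, Polynomial.eval_C, MahlerAux.eval_angleBinom]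
  have key : ∀ b : ℕ, b ≤ n → IsIntPoly (d b) := by
    intro b
    induction b using Nat.strong_induction_on with
    | _ b ih =>
      intro hb
      have hsub : ∑ ℓ ∈ Finset.range (b + 1), d ℓ * MahlerAux.Eb b ℓ
          = ∑ ℓ ∈ Finset.range (n + 1), d ℓ * MahlerAux.Eb b ℓ := by
        refine Finset.sum_subset (Finset.range_subset_range.mpr (by omega)) ?_
        intro ℓ _ hℓ
        rw [MahlerAux.Eb_eq_zero b ℓ (by simp at hℓ; omega), mul_zero]
      have hsum : f.eval ((RatFunc.X : RatFunc ℚ) ^ b)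
          = (∑ ℓ ∈ Finset.range b, d ℓ * MahlerAux.Eb b ℓ) + d b := by
        rw [heval b, ← hsub, Finset.sum_range_succ, MahlerAux.Eb_diag, mul_one]
      have hdb : d b = f.eval ((RatFunc.X : RatFunc ℚ) ^ b)
          - ∑ ℓ ∈ Finset.range b, d ℓ * MahlerAux.Eb b ℓ := by
        rw [hsum]; ring
      rw [hdb]
      exact MahlerAux.isIntPoly_sub (hf b)
        (MahlerAux.isIntPoly_sum _ _ fun ℓ hℓ =>
          MahlerAux.isIntPoly_mul
            (ih ℓ (Finset.mem_range.mp hℓ) (by have := Finset.mem_range.mp hℓ; omega))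
            (MahlerAux.Eb_int b ℓ))
  refine ⟨fun ℓ => if h : ℓ ≤ n then (key ℓ h).choose else 0, n + 1, ?_, ?_⟩
  · intro ℓ hℓ
    beta_reduce
    rw [dif_neg (by omega)]
  · rw [hd]
    refine Finset.sum_congr rfl fun ℓ hℓ => ?_
    have hℓn : ℓ ≤ n := by simp at hℓ; omega
    beta_reduce
    rw [dif_pos hℓn]
    congr 1
    exact congrArg Polynomial.C (key ℓ hℓn).choose_spec
end

section
/- For fixed nonnegative integers i ≥ 1 and m, there exists a polynomial p_{i,m}(b) in b of degree m+1 with leading coefficient 1/(i(m+1)) such that for all integers b ≥ i−1, p_{i,m}(b) equals the m-th derivative with respect to q of (∑_{j=0}^{b−i} q^j)/(∑_{j=0}^{i−1} q^j) evaluated at q = 1. -/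
open Finset

section Helpers

open Polynomial Topology

private lemma descFactorial_cast_prod (a : ℕ) :
    ∀ k : ℕ, (a.descFactorial k : ℝ) = ∏ r ∈ Finset.range k, ((a : ℝ) - r) := by
  intro k
  induction k with
  | zero => simp
  | succ k ih =>
    rcases le_or_gt k a with h | h
    · rw [Nat.descFactorial_succ, Finset.prod_range_succ, ← ih, Nat.cast_mul,
        Nat.cast_sub h]
      ring
    · rw [Nat.descFactorial_of_lt (Nat.lt_succ_of_lt h), Finset.prod_range_succ, ← ih,
        Nat.descFactorial_of_lt h]
      simp

private lemma descFactorial_rec (a k : ℕ) :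
    (a + 1).descFactorial (k + 1) = a.descFactorial (k + 1) + (k + 1) * a.descFactorial k := by
  rcases le_or_gt k a with h | h
  · rw [Nat.succ_descFactorial_succ, Nat.descFactorial_succ, ← add_mul]
    congr 1
    omega
  · rw [Nat.descFactorial_of_lt (show a + 1 < k + 1 by omega),
      Nat.descFactorial_of_lt (show a < k + 1 by omega), Nat.descFactorial_of_lt h]
    simp

private lemma sum_descFactorial (k : ℕ) :
    ∀ a : ℕ, ((k : ℝ) + 1) * ∑ j ∈ Finset.range a, (j.descFactorial k : ℝ)
      = (a.descFactorial (k + 1) : ℝ) := by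
  intro a
  induction a with
  | zero => simp
  | succ a ih =>
    rw [Finset.sum_range_succ, mul_add, ih, descFactorial_rec]
    push_cast
    ring

private lemma iterate_derivative_finset_sum {ι : Type*} (t : Finset ι) (k : ℕ) :
    ∀ p : ι → ℝ[X], derivative^[k] (∑ j ∈ t, p j) = ∑ j ∈ t, derivative^[k] (p j) := by
  induction k with
  | zero => intro p; simp
  | succ k ih =>
    intro p
    rw [Function.iterate_succ_apply, derivative_sum, ih]
    simp only [Function.iterate_succ_apply]

private lemma iteratedDeriv_polyEval (n : ℕ) :
    ∀ p : ℝ[X], iteratedDeriv n (fun x => p.eval x) = fun x => (derivative^[n] p).eval x := by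
  induction n with
  | zero => intro p; simp
  | succ n ih =>
    intro p
    have h : deriv (fun x => p.eval x) = fun x => p.derivative.eval x :=
      funext fun x => p.deriv
    rw [iteratedDeriv_succ', h, ih, Function.iterate_succ_apply]

private lemma diffAt_iteratedDeriv {s : Set ℝ} (hs : IsOpen s) {v : ℝ → ℝ}
    (hv : ContDiffOn ℝ (⊤ : ℕ∞) v s) (k : ℕ) {x : ℝ} (hx : x ∈ s) :
    DifferentiableAt ℝ (iteratedDeriv k v) x := by
  have hk : (k : WithTop ℕ∞) < ((⊤ : ℕ∞) : WithTop ℕ∞) := by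
    exact_mod_cast WithTop.coe_lt_top (k : ℕ)
  have h1 : DifferentiableWithinAt ℝ (iteratedDerivWithin k v s) s x :=
    hv.differentiableOn_iteratedDerivWithin hk hs.uniqueDiffOn x hx
  have h2 : Set.EqOn (iteratedDerivWithin k v s) (iteratedDeriv k v) s := by
    intro y hy
    simp only [iteratedDerivWithin, iteratedDeriv, iteratedFDerivWithin_of_isOpen k hs hy]
  exact (h1.congr (fun y hy => (h2 hy).symm) ((h2 hx).symm)).differentiableAt
    (hs.mem_nhds hx)

private lemma leibniz_iteratedDeriv {s : Set ℝ} (hs : IsOpen s) {u v : ℝ → ℝ}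
    (hu : ContDiffOn ℝ (⊤ : ℕ∞) u s) (hv : ContDiffOn ℝ (⊤ : ℕ∞) v s) :
    ∀ n : ℕ, ∀ x ∈ s, iteratedDeriv n (fun y => u y * v y) x
      = ∑ k ∈ Finset.range (n + 1),
          (n.choose k : ℝ) * (iteratedDeriv k u x * iteratedDeriv (n - k) v x) := by
  intro n
  induction n with
  | zero => intro x hx; simp
  | succ n ih =>
    intro x hx
    rw [iteratedDeriv_succ]
    have hev : (iteratedDeriv n fun y => u y * v y) =ᶠ[nhds x]
        fun y => ∑ k ∈ Finset.range (n + 1),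
          (n.choose k : ℝ) * (iteratedDeriv k u y * iteratedDeriv (n - k) v y) := by
      filter_upwards [hs.mem_nhds hx] with y hy using ih y hy
    rw [hev.deriv_eq, deriv_fun_sum (fun k _ =>
      (((diffAt_iteratedDeriv hs hu k hx).fun_mul
        (diffAt_iteratedDeriv hs hv (n - k) hx)).const_mul _))]
    rw [Finset.sum_choose_succ_mul
      (fun p q => iteratedDeriv p u x * iteratedDeriv q v x) n, ← Finset.sum_add_distrib]
    refine Finset.sum_congr rfl fun k hk => ?_
    have hk' : k ≤ n := Nat.lt_succ_iff.mp (Finset.mem_range.mp hk)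
    rw [deriv_const_mul _ ((diffAt_iteratedDeriv hs hu k hx).fun_mul
        (diffAt_iteratedDeriv hs hv (n - k) hx)),
      deriv_fun_mul (diffAt_iteratedDeriv hs hu k hx) (diffAt_iteratedDeriv hs hv (n - k) hx),
      ← iteratedDeriv_succ, ← iteratedDeriv_succ]
    have h1 : n + 1 - k = n - k + 1 := by omega
    rw [h1]
    ring

end Helpers

/-- For fixed integers `i ≥ 1` and `m ≥ 0` there is a polynomial `p_{i,m}(b)` of
degree `m+1` with leading coefficient `1/(i(m+1))` such that for all integers
`b ≥ i−1`, `p_{i,m}(b)` equals the `m`-th derivative with respect to `q` of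
`(∑_{j=0}^{b−i} q^j)/(∑_{j=0}^{i−1} q^j)` evaluated at `q = 1`. -/
theorem qratio_derivative_polynomial (i m : ℕ) (hi : 1 ≤ i) :
    ∃ p : Polynomial ℝ, p.degree = (m + 1 : ℕ) ∧
      p.leadingCoeff = 1 / (i * (m + 1)) ∧
      ∀ b : ℕ, i - 1 ≤ b →
        p.eval (b : ℝ) =
          iteratedDeriv m
            (fun q : ℝ => (∑ j ∈ Finset.range (b + 1 - i), q ^ j) /
              (∑ j ∈ Finset.range i, q ^ j)) 1 := by
  classical
  open Polynomial in
  set D : ℝ → ℝ := fun q => ∑ j ∈ Finset.range i, q ^ j with hDdef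
  set v : ℝ → ℝ := fun q => (D q)⁻¹ with hvdef
  set s : Set ℝ := {q | D q ≠ 0} with hsdef
  have hD1 : D 1 = (i : ℝ) := by simp [hDdef]
  have hDc : ContDiff ℝ (⊤ : ℕ∞) D :=
    ContDiff.sum fun j _ => contDiff_id.pow j
  have hsopen : IsOpen s := hDc.continuous.isOpen_preimage _ isOpen_ne
  have h1s : (1 : ℝ) ∈ s := by
    simp only [hsdef, Set.mem_setOf_eq, hD1]
    exact Nat.cast_ne_zero.mpr (by omega)
  have hvc : ContDiffOn ℝ (⊤ : ℕ∞) v s := hDc.contDiffOn.inv fun x hx => hx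
  set c : ℕ → ℝ := fun r => iteratedDeriv r v 1 with hcdef
  have hc0 : c 0 = (i : ℝ)⁻¹ := by simp [hcdef, hvdef, hD1]
  set Q : ℕ → ℝ[X] := fun k => ∏ r ∈ Finset.range (k + 1), (X - C ((i : ℝ) - 1 + r)) with hQdef
  have hQmonic : ∀ k, (Q k).Monic := fun k =>
    monic_prod_of_monic _ _ fun r _ => monic_X_sub_C _
  have hQnat : ∀ k, (Q k).natDegree = k + 1 := by
    intro k
    rw [hQdef, natDegree_prod_of_monic _ _ fun r _ => monic_X_sub_C _,
      Finset.sum_congr rfl fun r _ => natDegree_X_sub_C _]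
    simp
  have hQdeg : ∀ k, (Q k).degree = ((k + 1 : ℕ) : WithBot ℕ) := fun k => by
    rw [degree_eq_natDegree (hQmonic k).ne_zero, hQnat]
  set γ : ℕ → ℝ := fun k => (m.choose k : ℝ) * c (m - k) / (k + 1) with hγdef
  have hγm : γ m = 1 / (i * (m + 1)) := by
    simp only [hγdef, Nat.choose_self, Nat.sub_self, Nat.cast_one, one_mul, hc0]
    rw [one_div, mul_inv, inv_eq_one_div, inv_eq_one_div]
    ring
  have hγm_ne : γ m ≠ 0 := by
    rw [hγm]
    have hi' : (0:ℝ) < i := by exact_mod_cast hi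
    positivity
  set p : ℝ[X] := ∑ k ∈ Finset.range (m + 1), C (γ k) * Q k with hpdef
  have hsplit : p = (∑ k ∈ Finset.range m, C (γ k) * Q k) + C (γ m) * Q m := by
    rw [hpdef, Finset.sum_range_succ]
  have hbigdeg : (C (γ m) * Q m).degree = ((m + 1 : ℕ) : WithBot ℕ) := by
    rw [degree_C_mul hγm_ne, hQdeg]
  have hsmall : (∑ k ∈ Finset.range m, C (γ k) * Q k).degree < ((m + 1 : ℕ) : WithBot ℕ) := by
    refine lt_of_le_of_lt (degree_sum_le _ _) ?_
    rw [Finset.sup_lt_iff (by exact_mod_cast bot_lt_iff_ne_bot.mpr (by simp))]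
    intro k hk
    refine lt_of_le_of_lt (degree_mul_le _ _) ?_
    refine lt_of_le_of_lt (add_le_add degree_C_le le_rfl) ?_
    rw [zero_add, hQdeg]
    exact_mod_cast Nat.succ_lt_succ (Finset.mem_range.mp hk)
  have hdeg : p.degree = ((m + 1 : ℕ) : WithBot ℕ) := by
    rw [hsplit, degree_add_eq_right_of_degree_lt (by rw [hbigdeg]; exact hsmall), hbigdeg]
  have hlead : p.leadingCoeff = 1 / (i * (m + 1)) := by
    rw [hsplit, leadingCoeff_add_of_degree_lt (by rw [hbigdeg]; exact hsmall),
      leadingCoeff_mul, leadingCoeff_C, (hQmonic m).leadingCoeff, mul_one, hγm]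
  refine ⟨p, hdeg, hlead, ?_⟩
  intro b hb
  have hib : i ≤ b + 1 := by omega
  set a := b + 1 - i with hadef
  have hacast : (a : ℝ) = (b : ℝ) + 1 - i := by
    rw [hadef, Nat.cast_sub hib]
    push_cast
    ring
  have hfe : (fun q : ℝ => (∑ j ∈ Finset.range a, q ^ j) / (∑ j ∈ Finset.range i, q ^ j))
      = fun q => (∑ j ∈ Finset.range a, q ^ j) * v q := by
    funext q
    rw [hvdef]
    exact div_eq_mul_inv _ _
  rw [hfe]
  have huc : ContDiff ℝ (⊤ : ℕ∞) (fun q : ℝ => ∑ j ∈ Finset.range a, q ^ j) :=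
    ContDiff.sum fun j _ => contDiff_id.pow j
  rw [leibniz_iteratedDeriv hsopen huc.contDiffOn hvc m 1 h1s]
  have hA : ∀ k : ℕ, iteratedDeriv k (fun q : ℝ => ∑ j ∈ Finset.range a, q ^ j) 1
      = (a.descFactorial (k + 1) : ℝ) / (k + 1) := by
    intro k
    have hNu : (fun q : ℝ => ∑ j ∈ Finset.range a, q ^ j)
        = fun q => (∑ j ∈ Finset.range a, (X : ℝ[X]) ^ j).eval q := by
      funext q
      rw [eval_finset_sum]
      simp
    rw [hNu, iteratedDeriv_polyEval, iterate_derivative_finset_sum]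
    simp only [eval_finset_sum]
    have : ∀ j ∈ Finset.range a, (derivative^[k] ((X : ℝ[X]) ^ j)).eval 1
        = (j.descFactorial k : ℝ) := by
      intro j _
      rw [iterate_derivative_X_pow_eq_natCast_mul]
      simp
    rw [Finset.sum_congr rfl this, eq_div_iff (by positivity), mul_comm,
      sum_descFactorial]
  have hQeval : ∀ k : ℕ, (Q k).eval (b : ℝ) = (a.descFactorial (k + 1) : ℝ) := by
    intro k
    rw [hQdef, descFactorial_cast_prod, eval_prod]
    refine Finset.prod_congr rfl fun r _ => ?_
    rw [eval_sub, eval_X, eval_C, hacast]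
    ring
  rw [hpdef, eval_finset_sum]
  refine Finset.sum_congr rfl fun k _ => ?_
  rw [eval_mul, eval_C, hQeval, hA, hγdef]
  ring
end
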